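/- Let u, v : N → R be logarithmically concave sequences of positive reals and let w = u ⋆ v be their convolution, w_r = Σ_{j=0}^r u_{r-j} v_j. Then w is a logarithmically concave sequence of positive reals. -/

import Mathlib

/-- Discrete convolution of two sequences. -/
def conv (u v : ℕ → ℝ) : ℕ → ℝ := fun r => ∑ j ∈ Finset.range (r + 1), u (r - j) * v j

/-- Log-concavity implies the ratio inequality. -/
lemma ratio_lemma (v : ℕ → ℝ) (hv : ∀ r, 0 < v r)
    (hlc : ∀ r : ℕ, 1 ≤ r → v (r - 1) * v (r + 1) ≤ v r ^ 2) :
    ∀ m n, m ≤ n → v m * v (n + 1) ≤ v (m + 1) * v n := by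
  intro m n
  induction n with
  | zero =>
    intro h
    interval_cases m
    rw [mul_comm]
  | succ n ih =>
    intro h
    rcases Nat.eq_or_lt_of_le h with h' | h'
    · subst h'; rw [mul_comm]
    · have hmn : m ≤ n := by omega
      have h1 := ih hmn
      have h2 := hlc (n + 1) (by omega)
      simp only [Nat.add_sub_cancel] at h2
      nlinarith [hv m, hv n, hv (n + 1), hv (n + 2), hv (m + 1),
        mul_le_mul_of_nonneg_right h1 (le_of_lt (hv (n + 2))),
        mul_le_mul_of_nonneg_left h2 (le_of_lt (hv (m + 1)))]

/-- Cauchy–Binet identity for 2×2 determinants. -/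
lemma cauchy_binet_two (s : Finset ℕ) (A1 A2 B1 B2 : ℕ → ℝ) :
    (∑ k ∈ s, A1 k * B1 k) * (∑ k ∈ s, A2 k * B2 k)
      - (∑ k ∈ s, A1 k * B2 k) * (∑ k ∈ s, A2 k * B1 k)
    = (1 / 2) * ∑ k1 ∈ s, ∑ k2 ∈ s,
        (A1 k1 * A2 k2 - A1 k2 * A2 k1) * (B1 k1 * B2 k2 - B1 k2 * B2 k1) := by
  have h1 : (∑ k ∈ s, A1 k * B1 k) * (∑ k ∈ s, A2 k * B2 k)
      = ∑ k1 ∈ s, ∑ k2 ∈ s, (A1 k1 * B1 k1) * (A2 k2 * B2 k2) :=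
    Finset.sum_mul_sum _ _ _ _
  have h2 : (∑ k ∈ s, A1 k * B2 k) * (∑ k ∈ s, A2 k * B1 k)
      = ∑ k1 ∈ s, ∑ k2 ∈ s, (A1 k1 * B2 k1) * (A2 k2 * B1 k2) :=
    Finset.sum_mul_sum _ _ _ _
  have h1' : (∑ k ∈ s, A1 k * B1 k) * (∑ k ∈ s, A2 k * B2 k)
      = ∑ k1 ∈ s, ∑ k2 ∈ s, (A1 k2 * B1 k2) * (A2 k1 * B2 k1) := by
    rw [h1]; exact Finset.sum_comm
  have h2' : (∑ k ∈ s, A1 k * B2 k) * (∑ k ∈ s, A2 k * B1 k)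
      = ∑ k1 ∈ s, ∑ k2 ∈ s, (A1 k2 * B2 k2) * (A2 k1 * B1 k1) := by
    rw [h2]; exact Finset.sum_comm
  have key : ∑ k1 ∈ s, ∑ k2 ∈ s,
        (A1 k1 * A2 k2 - A1 k2 * A2 k1) * (B1 k1 * B2 k2 - B1 k2 * B2 k1)
      = ∑ k1 ∈ s, ∑ k2 ∈ s,
        ((A1 k1 * B1 k1) * (A2 k2 * B2 k2) + (A1 k2 * B1 k2) * (A2 k1 * B2 k1)
          - (A1 k1 * B2 k1) * (A2 k2 * B1 k2) - (A1 k2 * B2 k2) * (A2 k1 * B1 k1)) := by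
    refine Finset.sum_congr rfl fun k1 _ => Finset.sum_congr rfl fun k2 _ => by ring
  rw [key]
  simp only [Finset.sum_sub_distrib, Finset.sum_add_distrib]
  linarith [h1, h1', h2, h2']

theorem conv_log_concave (u v : ℕ → ℝ) (hu : ∀ r, 0 < u r) (hv : ∀ r, 0 < v r)
    (hulc : ∀ r : ℕ, 1 ≤ r → u (r - 1) * u (r + 1) ≤ u r ^ 2)
    (hvlc : ∀ r : ℕ, 1 ≤ r → v (r - 1) * v (r + 1) ≤ v r ^ 2) :
    (∀ r, 0 < conv u v r) ∧
    (∀ r : ℕ, 1 ≤ r → conv u v (r - 1) * conv u v (r + 1) ≤ conv u v r ^ 2) := by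
  have hupos := fun r => le_of_lt (hu r)
  constructor
  · intro r
    apply Finset.sum_pos
    · intro j _
      exact mul_pos (hu _) (hv _)
    · exact Finset.nonempty_range_iff.mpr (Nat.succ_ne_zero r)
  · intro r hr
    set A1 : ℕ → ℝ := fun k => if k ≤ r then u (r - k) else 0 with hA1
    set A2 : ℕ → ℝ := fun k => u (r + 1 - k) with hA2
    set B1 : ℕ → ℝ := v with hB1
    set B2 : ℕ → ℝ := fun k => if 1 ≤ k then v (k - 1) else 0 with hB2
    have e1 : conv u v r = ∑ k ∈ Finset.range (r + 2), A1 k * B1 k := by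
      rw [show r + 2 = (r + 1) + 1 from rfl, Finset.sum_range_succ]
      have : A1 (r + 1) = 0 := by simp [hA1]
      rw [this, zero_mul, add_zero]
      exact Finset.sum_congr rfl fun k hk => by
        have hk' : k ≤ r := by simpa using Nat.lt_succ_iff.mp (Finset.mem_range.mp hk)
        simp [hA1, hB1, hk', conv]
    have e2 : conv u v r = ∑ k ∈ Finset.range (r + 2), A2 k * B2 k := by
      rw [show r + 2 = (r + 1) + 1 from rfl, Finset.sum_range_succ']
      have h0 : A2 0 * B2 0 = 0 := by simp [hB2]
      rw [h0, add_zero]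
      exact Finset.sum_congr rfl fun k hk => by
        simp only [hA2, hB2]
        rw [if_pos (by omega : 1 ≤ k + 1)]
        congr 2 <;> omega
    have e3 : conv u v (r - 1) = ∑ k ∈ Finset.range (r + 2), A1 k * B2 k := by
      rw [show r + 2 = (r + 1) + 1 from rfl, Finset.sum_range_succ]
      have : A1 (r + 1) = 0 := by simp [hA1]
      rw [this, zero_mul, add_zero, Finset.sum_range_succ']
      have h0 : A1 0 * B2 0 = 0 := by simp [hB2]
      rw [h0, add_zero]
      have hconv : conv u v (r - 1) = ∑ j ∈ Finset.range r, u (r - 1 - j) * v j := by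
        have hr1 : r - 1 + 1 = r := by omega
        unfold conv
        rw [hr1]
      rw [hconv]
      exact Finset.sum_congr rfl fun k hk => by
        have hk' : k < r := Finset.mem_range.mp hk
        simp only [hA1, hB2]
        rw [if_pos (by omega : k + 1 ≤ r), if_pos (by omega : 1 ≤ k + 1)]
        congr 2 <;> omega
    have e4 : conv u v (r + 1) = ∑ k ∈ Finset.range (r + 2), A2 k * B1 k := rfl
    have cb := cauchy_binet_two (Finset.range (r + 2)) A1 A2 B1 B2
    rw [← e1, ← e2, ← e3, ← e4] at cb
    -- nonnegativity of each term
    have hDA : ∀ k1 k2, k1 ≤ k2 → k2 ≤ r + 1 → 0 ≤ A1 k1 * A2 k2 - A1 k2 * A2 k1 := by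
      intro k1 k2 hle hk2
      by_cases hk2r : k2 ≤ r
      · have hk1r : k1 ≤ r := le_trans hle hk2r
        simp only [hA1, hA2, if_pos hk1r, if_pos hk2r]
        have := ratio_lemma u hu hulc (r - k2) (r - k1) (by omega)
        have e5 : r - k2 + 1 = r + 1 - k2 := by omega
        have e6 : r - k1 + 1 = r + 1 - k1 := by omega
        rw [e5, e6] at this
        linarith
      · have : A1 k2 = 0 := by simp only [hA1]; rw [if_neg hk2r]
        rw [this, zero_mul, sub_zero]
        apply mul_nonneg
        · simp only [hA1]
          split
          · exact hupos _
          · exact le_refl 0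
        · exact le_of_lt (hu _)
    have hDB : ∀ k1 k2, k1 ≤ k2 → 0 ≤ B1 k1 * B2 k2 - B2 k1 * B1 k2 := by
      intro k1 k2 hle
      rcases Nat.eq_zero_or_pos k1 with h0 | h1
      · subst h0
        have : B2 0 = 0 := by simp [hB2]
        rw [this, zero_mul, sub_zero]
        apply mul_nonneg (le_of_lt (hv 0))
        simp only [hB2]
        split
        · exact le_of_lt (hv _)
        · exact le_refl 0
      · have hk2 : 1 ≤ k2 := le_trans h1 hle
        simp only [hB1, hB2]
        rw [if_pos (by omega : 1 ≤ k1), if_pos (by omega : 1 ≤ k2)]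
        have := ratio_lemma v hv hvlc (k1 - 1) (k2 - 1) (by omega)
        have e5 : k1 - 1 + 1 = k1 := by omega
        have e6 : k2 - 1 + 1 = k2 := by omega
        rw [e5, e6] at this
        linarith
    have hterm : ∀ k1 ∈ Finset.range (r + 2), ∀ k2 ∈ Finset.range (r + 2),
        0 ≤ (A1 k1 * A2 k2 - A1 k2 * A2 k1) * (B1 k1 * B2 k2 - B1 k2 * B2 k1) := by
      intro k1 hk1 k2 hk2
      have hk1' : k1 ≤ r + 1 := by have := Finset.mem_range.mp hk1; omega
      have hk2' : k2 ≤ r + 1 := by have := Finset.mem_range.mp hk2; omega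
      rcases le_total k1 k2 with hle | hle
      · apply mul_nonneg (hDA k1 k2 hle hk2')
        have := hDB k1 k2 hle
        linarith
      · have heq : (A1 k1 * A2 k2 - A1 k2 * A2 k1) * (B1 k1 * B2 k2 - B1 k2 * B2 k1)
            = (A1 k2 * A2 k1 - A1 k1 * A2 k2) * (B1 k2 * B2 k1 - B1 k1 * B2 k2) := by ring
        rw [heq]
        apply mul_nonneg (hDA k2 k1 hle hk1')
        have := hDB k2 k1 hle
        linarith
    have hnn : 0 ≤ ∑ k1 ∈ Finset.range (r + 2), ∑ k2 ∈ Finset.range (r + 2),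
        (A1 k1 * A2 k2 - A1 k2 * A2 k1) * (B1 k1 * B2 k2 - B1 k2 * B2 k1) :=
      Finset.sum_nonneg fun k1 hk1 => Finset.sum_nonneg fun k2 hk2 => hterm k1 hk1 k2 hk2
    nlinarith [cb, hnn]
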